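/- For every α > 1 and every β with 1 ≤ β < 1 + 2/(α−1), and for every ε > 0, there exists a planar graph G with non-negative edge weights and a root vertex r such that every spanning tree T of G satisfying d_T(r,v) ≤ α·d_G(r,v) for all vertices v has weight strictly greater than β times the minimum spanning tree weight of G. -/

import Mathlib

open SimpleGraph Finset

noncomputable def walkWeight {V : Type*} {G : SimpleGraph V} (w : Sym2 V → ℝ)
    {u v : V} (p : G.Walk u v) : ℝ :=
  (p.edges.map w).sum

noncomputable def wdist {V : Type*} (G : SimpleGraph V) (w : Sym2 V → ℝ) (u v : V) : ℝ :=
  sInf {x | ∃ p : G.Walk u v, walkWeight w p = x}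

open scoped Classical in
noncomputable def gweight {V : Type*} [Fintype V] (G : SimpleGraph V) (w : Sym2 V → ℝ) : ℝ :=
  ∑ e ∈ G.edgeSet.toFinset, w e
/-- `H` is a minor of `G`: there are disjoint connected branch sets in `G`,
one for each vertex of `H`, with adjacent branch sets for adjacent vertices. -/
def GraphIsMinor {W V : Type*} (H : SimpleGraph W) (G : SimpleGraph V) : Prop :=
  ∃ f : W → Set V, (∀ x, (G.induce (f x)).Connected) ∧
    (Pairwise fun x y => Disjoint (f x) (f y)) ∧
    ∀ x y, H.Adj x y → ∃ a ∈ f x, ∃ b ∈ f y, G.Adj a b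

/-- Planarity, via Wagner's characterization: no `K₅` minor and no `K₃,₃` minor. -/
def GraphIsPlanar {V : Type*} (G : SimpleGraph V) : Prop :=
  ¬ GraphIsMinor (⊤ : SimpleGraph (Fin 5)) G ∧
    ¬ GraphIsMinor (completeBipartiteGraph (Fin 3) (Fin 3)) G


section Generic
variable {V : Type*} {G : SimpleGraph V} {w : Sym2 V → ℝ}

lemma walkWeight_nonneg (hw : ∀ e, 0 ≤ w e) {u v : V} (p : G.Walk u v) :
    0 ≤ walkWeight w p :=
  List.sum_nonneg (by rintro x hx; obtain ⟨e, -, rfl⟩ := List.mem_map.1 hx; exact hw e)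

lemma walkWeight_cons {u x v : V} (h : G.Adj u x) (p : G.Walk x v) :
    walkWeight w (Walk.cons h p) = w s(u, x) + walkWeight w p := by
  simp [walkWeight]

lemma potential_le {φ : V → ℝ}
    (h : ∀ x y, G.Adj x y → φ y - φ x ≤ w s(x, y)) {u v : V} (p : G.Walk u v) :
    φ v - φ u ≤ walkWeight w p := by
  induction p with
  | nil => simp [walkWeight]
  | @cons a b c hab q ih =>
      have := h a b hab
      rw [walkWeight_cons]
      linarith

lemma wdist_le_walk (hw : ∀ e, 0 ≤ w e) {u v : V} (p : G.Walk u v) :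
    wdist G w u v ≤ walkWeight w p :=
  csInf_le ⟨0, by rintro x ⟨q, rfl⟩; exact walkWeight_nonneg hw q⟩ ⟨p, rfl⟩

lemma le_wdist {b : ℝ} (hr : G.Reachable u v)
    (hb : ∀ p : G.Walk u v, b ≤ walkWeight w p) : b ≤ wdist G w u v := by
  obtain ⟨p⟩ := hr
  exact le_csInf ⟨_, p, rfl⟩ (by rintro x ⟨q, rfl⟩; exact hb q)

lemma not_reachable_closed {S : Set V}
    (hS : ∀ ⦃x⦄, x ∈ S → ∀ ⦃y⦄, G.Adj x y → y ∈ S) {u v : V}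
    (hu : u ∈ S) (hv : v ∉ S) : ¬ G.Reachable u v := by
  rintro ⟨p⟩
  apply hv
  clear hv
  induction p with
  | nil => exact hu
  | @cons a b c hab q ih => exact ih (hS hu hab)

lemma isAcyclic_mono {H : SimpleGraph V} (hle : H ≤ G) (hG : G.IsAcyclic) :
    H.IsAcyclic :=
  fun _ c hc => hG (c.mapLe hle) ((Walk.mapLe_isCycle hle).2 hc)

lemma reachable_of_induce {F' : SimpleGraph V} {A : Set V}
    (hc : (G.induce A).Connected)
    (hsub : ∀ x y : V, x ∈ A → y ∈ A → G.Adj x y → F'.Adj x y)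
    {a b : V} (ha : a ∈ A) (hb : b ∈ A) : F'.Reachable a b := by
  have h := hc.preconnected ⟨a, ha⟩ ⟨b, hb⟩
  exact h.map ⟨Subtype.val, fun {x y} hadj => hsub _ _ x.2 y.2 (by simpa using hadj)⟩

lemma gweight_eq_sum {V : Type*} [Fintype V] (G : SimpleGraph V) (w : Sym2 V → ℝ)
    (s : Finset (Sym2 V)) (h : ∀ e, e ∈ s ↔ e ∈ G.edgeSet) :
    gweight G w = ∑ e ∈ s, w e := by
  classical
  unfold gweight
  exact Finset.sum_congr (Finset.ext fun e => by rw [Set.mem_toFinset, h e]) (fun _ _ => rfl)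

lemma sum_le_gweight {V : Type*} [Fintype V] (G : SimpleGraph V) (w : Sym2 V → ℝ)
    (hw : ∀ e, 0 ≤ w e) (K : Finset (Sym2 V)) (h : ∀ e ∈ K, e ∈ G.edgeSet) :
    ∑ e ∈ K, w e ≤ gweight G w := by
  classical
  unfold gweight
  exact Finset.sum_le_sum_of_subset_of_nonneg
    (fun e he => Set.mem_toFinset.2 (h e he)) (fun e _ _ => hw e)

end Generic

namespace KRY

abbrev Vx (ℓ m : ℕ) := Bool ⊕ (Fin (ℓ+1) × Fin (m+1))

variable (ℓ m : ℕ)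

def vr : Vx ℓ m := Sum.inl false
def vc : Vx ℓ m := Sum.inl true
def leaf (i : Fin (ℓ+1)) : Vx ℓ m := Sum.inr (i, Fin.last m)

def R : Vx ℓ m → Vx ℓ m → Prop
  | Sum.inl a, Sum.inl b => a = false ∧ b = true
  | Sum.inl a, Sum.inr (_, j) => (a = true ∧ (j : ℕ) = 0) ∨ (a = false ∧ (j : ℕ) = m)
  | Sum.inr (i, j), Sum.inr (i', j') => i = i' ∧ (j' : ℕ) = (j : ℕ) + 1
  | Sum.inr _, Sum.inl _ => False

def R0 : Vx ℓ m → Vx ℓ m → Prop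
  | Sum.inl a, Sum.inl b => a = false ∧ b = true
  | Sum.inl a, Sum.inr (_, j) => a = true ∧ (j : ℕ) = 0
  | Sum.inr (i, j), Sum.inr (i', j') => i = i' ∧ (j' : ℕ) = (j : ℕ) + 1
  | Sum.inr _, Sum.inl _ => False

lemma R_irrefl : ∀ x, ¬ R ℓ m x x := by
  rintro (a | ⟨i, j⟩) h
  · obtain ⟨h1, h2⟩ := h; simp [h1] at h2
  · rcases h with ⟨-, h2⟩; omega

lemma R0_irrefl : ∀ x, ¬ R0 ℓ m x x := by
  rintro (a | ⟨i, j⟩) h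
  · obtain ⟨h1, h2⟩ := h; simp [h1] at h2
  · rcases h with ⟨-, h2⟩; omega

lemma R0_le_R : ∀ x y, R0 ℓ m x y → R ℓ m x y := by
  rintro (a | ⟨i, j⟩) (b | ⟨i', j'⟩) h
  · exact h
  · exact Or.inl h
  · exact h.elim
  · exact h

def Gr : SimpleGraph (Vx ℓ m) where
  Adj x y := R ℓ m x y ∨ R ℓ m y x
  symm := ⟨fun x y h => h.symm⟩
  loopless := ⟨fun x h => by
    rcases h with h | h <;> exact R_irrefl ℓ m x h⟩

def M0 : SimpleGraph (Vx ℓ m) where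
  Adj x y := R0 ℓ m x y ∨ R0 ℓ m y x
  symm := ⟨fun x y h => h.symm⟩
  loopless := ⟨fun x h => by
    rcases h with h | h <;> exact R0_irrefl ℓ m x h⟩

def Gtree : SimpleGraph (Vx ℓ m) where
  Adj x y := (Gr ℓ m).Adj x y ∧ x ≠ vr ℓ m ∧ y ≠ vr ℓ m
  symm := ⟨fun x y ⟨h, hx, hy⟩ => ⟨h.symm, hy, hx⟩⟩
  loopless := ⟨fun x ⟨h, _, _⟩ => (Gr ℓ m).loopless.irrefl x h⟩

lemma m0_le_gr : M0 ℓ m ≤ Gr ℓ m := by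
  rintro x y (h | h)
  · exact Or.inl (R0_le_R ℓ m _ _ h)
  · exact Or.inr (R0_le_R ℓ m _ _ h)

def prev (i : Fin (ℓ+1)) (j : Fin (m+1)) : Vx ℓ m :=
  if (j : ℕ) = 0 then vc ℓ m else Sum.inr (i, ⟨(j : ℕ) - 1, by omega⟩)

lemma prev_ne_vr (i : Fin (ℓ+1)) (j : Fin (m+1)) : prev ℓ m i j ≠ vr ℓ m := by
  unfold prev vr vc; split <;> simp

lemma prev_ne_inr (i i' : Fin (ℓ+1)) (j : Fin (m+1)) :
    prev ℓ m i j ≠ Sum.inr (i', j) := by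
  unfold prev vc
  split_ifs with h
  · simp
  · intro hh
    rw [Sum.inr.injEq, Prod.mk.injEq] at hh
    have h2 := congrArg Fin.val hh.2
    simp at h2
    omega

lemma m0_adj_prev (i : Fin (ℓ+1)) (j : Fin (m+1)) :
    (M0 ℓ m).Adj (prev ℓ m i j) (Sum.inr (i, j)) := by
  unfold prev
  split_ifs with h
  · exact Or.inl ⟨rfl, h⟩
  · exact Or.inl ⟨rfl, by simp; omega⟩

lemma gr_adj_prev (i : Fin (ℓ+1)) (j : Fin (m+1)) :
    (Gr ℓ m).Adj (prev ℓ m i j) (Sum.inr (i, j)) :=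
  m0_le_gr ℓ m (m0_adj_prev ℓ m i j)

lemma gr_adj_leaf (i : Fin (ℓ+1)) : (Gr ℓ m).Adj (vr ℓ m) (leaf ℓ m i) :=
  Or.inl (Or.inr ⟨rfl, by simp [leaf]⟩)

/-- Case analysis for `M0` adjacency. -/
lemma m0_adj_cases {ℓ m : ℕ} {x y : Vx ℓ m} (h : (M0 ℓ m).Adj x y) :
    (x = vr ℓ m ∧ y = vc ℓ m) ∨ (y = vr ℓ m ∧ x = vc ℓ m) ∨
    (∃ i j, x = prev ℓ m i j ∧ y = Sum.inr (i, j)) ∨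
    (∃ i j, y = prev ℓ m i j ∧ x = Sum.inr (i, j)) := by
  have key : ∀ a b : Vx ℓ m, R0 ℓ m a b →
      (a = vr ℓ m ∧ b = vc ℓ m) ∨ (∃ i j, a = prev ℓ m i j ∧ b = Sum.inr (i, j)) := by
    rintro (a | ⟨i, j⟩) (b | ⟨i', j'⟩) hr
    · exact Or.inl ⟨by simp [vr, hr.1], by simp [vc, hr.2]⟩
    · obtain ⟨rfl, h0⟩ := hr
      refine Or.inr ⟨i', j', ?_, rfl⟩
      unfold prev; rw [if_pos h0]; rfl
    · exact hr.elim
    · obtain ⟨rfl, hsucc⟩ := hr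
      refine Or.inr ⟨i, j', ?_, rfl⟩
      unfold prev
      rw [if_neg (by omega)]
      congr 2
      apply Fin.ext; simp; omega
  rcases h with h | h
  · rcases key _ _ h with h' | h'
    · exact Or.inl h'
    · exact Or.inr (Or.inr (Or.inl h'))
  · rcases key _ _ h with h' | h'
    · exact Or.inr (Or.inl h')
    · exact Or.inr (Or.inr (Or.inr h'))

/-- Case analysis for `Gr` adjacency. -/
lemma gr_adj_cases {ℓ m : ℕ} {x y : Vx ℓ m} (h : (Gr ℓ m).Adj x y) :
    (x = vr ℓ m ∧ y = vc ℓ m) ∨ (y = vr ℓ m ∧ x = vc ℓ m) ∨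
    (∃ i j, x = prev ℓ m i j ∧ y = Sum.inr (i, j)) ∨
    (∃ i j, y = prev ℓ m i j ∧ x = Sum.inr (i, j)) ∨
    (∃ i, x = vr ℓ m ∧ y = leaf ℓ m i) ∨
    (∃ i, y = vr ℓ m ∧ x = leaf ℓ m i) := by
  have key : ∀ a b : Vx ℓ m, R ℓ m a b →
      (a = vr ℓ m ∧ b = vc ℓ m) ∨ (∃ i j, a = prev ℓ m i j ∧ b = Sum.inr (i, j)) ∨
      (∃ i, a = vr ℓ m ∧ b = leaf ℓ m i) := by
    rintro (a | ⟨i, j⟩) (b | ⟨i', j'⟩) hr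
    · exact Or.inl ⟨by simp [vr, hr.1], by simp [vc, hr.2]⟩
    · rcases hr with ⟨rfl, h0⟩ | ⟨rfl, hm⟩
      · refine Or.inr (Or.inl ⟨i', j', ?_, rfl⟩)
        unfold prev; rw [if_pos h0]; rfl
      · refine Or.inr (Or.inr ⟨i', rfl, ?_⟩)
        unfold leaf
        congr 2
        apply Fin.ext; simp [Fin.last]; omega
    · exact hr.elim
    · obtain ⟨rfl, hsucc⟩ := hr
      refine Or.inr (Or.inl ⟨i, j', ?_, rfl⟩)
      unfold prev
      rw [if_neg (by omega)]
      congr 2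
      apply Fin.ext; simp; omega
  rcases h with h | h
  · rcases key _ _ h with h' | h' | h'
    · exact Or.inl h'
    · exact Or.inr (Or.inr (Or.inl h'))
    · exact Or.inr (Or.inr (Or.inr (Or.inr (Or.inl h'))))
  · rcases key _ _ h with h' | h' | h'
    · exact Or.inr (Or.inl h')
    · exact Or.inr (Or.inr (Or.inr (Or.inl h')))
    · exact Or.inr (Or.inr (Or.inr (Or.inr (Or.inr h'))))

end KRY

namespace KRY

variable (ℓ m : ℕ)

lemma m0_adj_rc : (M0 ℓ m).Adj (vr ℓ m) (vc ℓ m) := Or.inl ⟨rfl, rfl⟩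

lemma m0_reach : ∀ x : Vx ℓ m, (M0 ℓ m).Reachable (vr ℓ m) x := by
  have spoke : ∀ (i : Fin (ℓ+1)) (jn : ℕ) (hj : jn < m + 1),
      (M0 ℓ m).Reachable (vr ℓ m) (Sum.inr (i, ⟨jn, hj⟩)) := by
    intro i jn
    induction jn with
    | zero =>
        intro hj
        exact (m0_adj_rc ℓ m).reachable.trans (Adj.reachable (Or.inl ⟨rfl, rfl⟩))
    | succ k ih =>
        intro hj
        exact (ih (by omega)).trans (Adj.reachable (Or.inl ⟨rfl, rfl⟩))
  rintro (a | ⟨i, j⟩)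
  · cases a
    · exact Reachable.refl _
    · exact (m0_adj_rc ℓ m).reachable
  · simpa [Fin.eta] using spoke i (j : ℕ) j.isLt

lemma m0_connected : (M0 ℓ m).Connected := by
  rw [connected_iff]
  exact ⟨fun a b => ((m0_reach ℓ m a).symm.trans (m0_reach ℓ m b)), ⟨vr ℓ m⟩⟩

lemma gr_connected : (Gr ℓ m).Connected :=
  (m0_connected ℓ m).mono (m0_le_gr ℓ m)

lemma vr_ne_vc : vr ℓ m ≠ vc ℓ m := by simp [vr, vc]

lemma prev_eq_inr {ℓ m : ℕ} {i' i : Fin (ℓ+1)} {j' t : Fin (m+1)}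
    (h : prev ℓ m i' j' = Sum.inr (i, t)) : i' = i ∧ (j' : ℕ) = (t : ℕ) + 1 := by
  unfold prev at h
  split_ifs at h with h0
  · exact absurd h (by simp [vc])
  · rw [Sum.inr.injEq, Prod.mk.injEq] at h
    obtain ⟨rfl, h2⟩ := h
    have h3 := congrArg Fin.val h2
    simp at h3
    exact ⟨rfl, by omega⟩

lemma m0_not_reach_rc :
    ¬ ((M0 ℓ m) \ fromEdgeSet {s(vr ℓ m, vc ℓ m)}).Reachable (vr ℓ m) (vc ℓ m) := by
  refine not_reachable_closed (S := {vr ℓ m}) ?_ (Set.mem_singleton _)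
    (by simp [vr, vc])
  intro x hx y hadj
  rw [Set.mem_singleton_iff] at hx
  subst hx
  rw [SimpleGraph.sdiff_adj] at hadj
  obtain ⟨hm0, hne⟩ := hadj
  rcases m0_adj_cases hm0 with ⟨-, rfl⟩ | ⟨h1, h2⟩ | ⟨i, j, hx, hy⟩ | ⟨i, j, hy, hx⟩
  · exact absurd ((fromEdgeSet_adj _).2 ⟨Set.mem_singleton _, vr_ne_vc ℓ m⟩) hne
  · exact absurd h2 (vr_ne_vc ℓ m)
  · exact absurd hx.symm (prev_ne_vr ℓ m i j)
  · exact absurd hx (by simp [vr])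

lemma m0_not_reach_spoke (i : Fin (ℓ+1)) (j : Fin (m+1)) :
    ¬ ((M0 ℓ m) \ fromEdgeSet {s(prev ℓ m i j, Sum.inr (i, j))}).Reachable
      (Sum.inr (i, j)) (prev ℓ m i j) := by
  refine not_reachable_closed
    (S := {z | ∃ t : Fin (m+1), (j : ℕ) ≤ (t : ℕ) ∧ z = Sum.inr (i, t)}) ?_
    ⟨j, le_refl _, rfl⟩ ?_
  · rintro x ⟨t, ht, rfl⟩ y hadj
    rw [SimpleGraph.sdiff_adj] at hadj
    obtain ⟨hm0, hne⟩ := hadj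
    rcases m0_adj_cases hm0 with ⟨h1, -⟩ | ⟨-, h2⟩ | ⟨i', j', hx, rfl⟩ | ⟨i', j', rfl, hx⟩
    · exact absurd h1 (by simp [vr])
    · exact absurd h2 (by simp [vc])
    · -- x = prev i' j' : so j' = t+1, y = inr (i, j')
      obtain ⟨rfl, hj'⟩ := prev_eq_inr hx.symm
      exact ⟨j', by omega, rfl⟩
    · -- y = prev i t (from x = inr (i', j') = inr (i, t))
      rw [Sum.inr.injEq, Prod.mk.injEq] at hx
      obtain ⟨rfl, rfl⟩ := hx
      by_cases hcase : (t : ℕ) = (j : ℕ)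
      · exfalso
        apply hne
        rw [fromEdgeSet_adj]
        have hjj : t = j := Fin.ext hcase
        subst hjj
        refine ⟨?_, fun hcon => prev_ne_inr ℓ m i i t hcon.symm⟩
        rw [Sym2.eq_swap]
        exact Set.mem_singleton _
      · have hlt : (j : ℕ) < (t : ℕ) := by omega
        unfold prev
        rw [if_neg (by omega)]
        exact ⟨⟨(t : ℕ) - 1, by omega⟩, by simp; omega, rfl⟩
  · rintro ⟨t, ht, heq⟩
    obtain ⟨-, h2⟩ := prev_eq_inr heq
    omega

lemma m0_acyclic : (M0 ℓ m).IsAcyclic := by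
  rw [isAcyclic_iff_forall_adj_isBridge]
  intro x y h
  rcases m0_adj_cases h with ⟨rfl, rfl⟩ | ⟨rfl, rfl⟩ | ⟨i, j, rfl, rfl⟩ | ⟨i, j, rfl, rfl⟩
  · exact isBridge_iff.2 (m0_not_reach_rc ℓ m)
  · rw [Sym2.eq_swap]
    exact isBridge_iff.2 (m0_not_reach_rc ℓ m)
  · exact isBridge_iff.2 (fun hr => m0_not_reach_spoke ℓ m i j hr.symm)
  · rw [Sym2.eq_swap]
    exact isBridge_iff.2 (fun hr => m0_not_reach_spoke ℓ m i j hr.symm)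

lemma m0_isTree : (M0 ℓ m).IsTree := by
  rw [isTree_iff]
  exact ⟨m0_connected ℓ m, m0_acyclic ℓ m⟩

lemma gtree_le_m0 : Gtree ℓ m ≤ M0 ℓ m := by
  rintro x y ⟨hadj, hx, hy⟩
  rcases gr_adj_cases hadj with ⟨rfl, -⟩ | ⟨rfl, -⟩ | ⟨i, j, rfl, rfl⟩ | ⟨i, j, rfl, rfl⟩ |
    ⟨i, rfl, -⟩ | ⟨i, rfl, -⟩
  · exact absurd rfl hx
  · exact absurd rfl hy
  · exact m0_adj_prev ℓ m i j
  · exact (m0_adj_prev ℓ m i j).symm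
  · exact absurd rfl hx
  · exact absurd rfl hy

lemma gtree_acyclic : (Gtree ℓ m).IsAcyclic :=
  isAcyclic_mono (gtree_le_m0 ℓ m) (m0_acyclic ℓ m)

end KRY

namespace KRY

variable (ℓ m : ℕ) (Aw dw : ℝ)

open Classical in
noncomputable def wt : Sym2 (Vx ℓ m) → ℝ := fun s =>
  if s = s(vr ℓ m, vc ℓ m) then Aw
  else if ∃ i, s = s(vr ℓ m, leaf ℓ m i) then 2 else dw

lemma wt_nonneg (hA : 0 ≤ Aw) (hd : 0 ≤ dw) : ∀ e, 0 ≤ wt ℓ m Aw dw e := by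
  intro e
  unfold wt
  split_ifs
  · exact hA
  · norm_num
  · exact hd

lemma wt_rc : wt ℓ m Aw dw s(vr ℓ m, vc ℓ m) = Aw := if_pos rfl

lemma vr_ne_leaf (i : Fin (ℓ+1)) : vr ℓ m ≠ leaf ℓ m i := by simp [vr, leaf]
lemma vc_ne_leaf (i : Fin (ℓ+1)) : vc ℓ m ≠ leaf ℓ m i := by simp [vc, leaf]

lemma wt_leaf (i : Fin (ℓ+1)) : wt ℓ m Aw dw s(vr ℓ m, leaf ℓ m i) = 2 := by
  unfold wt
  rw [if_neg, if_pos ⟨i, rfl⟩]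
  intro h
  rw [Sym2.eq_iff] at h
  rcases h with ⟨-, h⟩ | ⟨h, -⟩
  · exact vc_ne_leaf ℓ m i h.symm
  · exact vr_ne_vc ℓ m h

lemma wt_of_ne_vr {x y : Vx ℓ m} (hx : x ≠ vr ℓ m) (hy : y ≠ vr ℓ m) :
    wt ℓ m Aw dw s(x, y) = dw := by
  unfold wt
  rw [if_neg, if_neg]
  · rintro ⟨i, h⟩
    rw [Sym2.eq_iff] at h
    rcases h with ⟨h1, -⟩ | ⟨-, h2⟩
    · exact hx h1
    · exact hy h2
  · intro h
    rw [Sym2.eq_iff] at h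
    rcases h with ⟨h1, -⟩ | ⟨-, h2⟩
    · exact hx h1
    · exact hy h2

lemma inr_ne_vr (p : Fin (ℓ+1) × Fin (m+1)) : (Sum.inr p : Vx ℓ m) ≠ vr ℓ m := by
  simp [vr]

lemma wt_sedge (i : Fin (ℓ+1)) (j : Fin (m+1)) :
    wt ℓ m Aw dw s(prev ℓ m i j, Sum.inr (i, j)) = dw :=
  wt_of_ne_vr ℓ m Aw dw (prev_ne_vr ℓ m i j) (inr_ne_vr ℓ m (i, j))

def enc : Option (Fin (ℓ+1) × Fin (m+1)) → Sym2 (Vx ℓ m)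
  | none => s(vr ℓ m, vc ℓ m)
  | some (i, j) => s(prev ℓ m i j, Sum.inr (i, j))

lemma sedge_ne_rc (i : Fin (ℓ+1)) (j : Fin (m+1)) :
    s(prev ℓ m i j, Sum.inr (i, j)) ≠ s(vr ℓ m, vc ℓ m) := by
  intro h
  rw [Sym2.eq_iff] at h
  rcases h with ⟨h1, -⟩ | ⟨-, h2⟩
  · exact prev_ne_vr ℓ m i j h1
  · exact inr_ne_vr ℓ m (i, j) h2

lemma sedge_inj {ℓ m : ℕ} {i i' : Fin (ℓ+1)} {j j' : Fin (m+1)}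
    (h : s(prev ℓ m i j, Sum.inr (i, j)) = s(prev ℓ m i' j', Sum.inr (i', j'))) :
    i = i' ∧ j = j' := by
  rw [Sym2.eq_iff] at h
  rcases h with ⟨-, h2⟩ | ⟨h1, h2⟩
  · rw [Sum.inr.injEq, Prod.mk.injEq] at h2
    exact h2
  · obtain ⟨-, hj1⟩ := prev_eq_inr h1
    obtain ⟨-, hj2⟩ := prev_eq_inr h2.symm
    exfalso
    omega

lemma enc_injective : Function.Injective (enc ℓ m) := by
  rintro (_ | ⟨i, j⟩) (_ | ⟨i', j'⟩) h
  · rfl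
  · exact absurd h.symm (sedge_ne_rc ℓ m i' j')
  · exact absurd h (sedge_ne_rc ℓ m i j)
  · obtain ⟨rfl, rfl⟩ := sedge_inj h
    rfl

lemma m0_edgeSet : (M0 ℓ m).edgeSet = Set.range (enc ℓ m) := by
  ext e
  induction e using Sym2.ind with
  | _ x y =>
    constructor
    · intro h
      rw [SimpleGraph.mem_edgeSet] at h
      rcases m0_adj_cases h with ⟨rfl, rfl⟩ | ⟨rfl, rfl⟩ | ⟨i, j, rfl, rfl⟩ | ⟨i, j, rfl, rfl⟩
      · exact ⟨none, rfl⟩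
      · exact ⟨none, Sym2.eq_swap⟩
      · exact ⟨some (i, j), rfl⟩
      · exact ⟨some (i, j), Sym2.eq_swap⟩
    · rintro ⟨o, ho⟩
      rw [← ho]
      rcases o with _ | ⟨i, j⟩
      · exact (SimpleGraph.mem_edgeSet _).2 (m0_adj_rc ℓ m)
      · exact (SimpleGraph.mem_edgeSet _).2 (m0_adj_prev ℓ m i j)

lemma gweight_m0 :
    gweight (M0 ℓ m) (wt ℓ m Aw dw) = Aw + ((ℓ : ℝ)+1) * (((m : ℝ)+1) * dw) := by
  rw [gweight_eq_sum (M0 ℓ m) (wt ℓ m Aw dw) (Finset.image (enc ℓ m) Finset.univ)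
    (by intro e; rw [m0_edgeSet]; simp [Set.mem_range])]
  rw [Finset.sum_image (fun x _ y _ h => enc_injective ℓ m h), Fintype.sum_option]
  have h1 : wt ℓ m Aw dw (enc ℓ m none) = Aw := wt_rc ℓ m Aw dw
  have h2 : ∀ p : Fin (ℓ+1) × Fin (m+1), wt ℓ m Aw dw (enc ℓ m (some p)) = dw := by
    rintro ⟨i, j⟩
    exact wt_sedge ℓ m Aw dw i j
  rw [h1, Finset.sum_congr rfl (fun p _ => h2 p), Finset.sum_const, Finset.card_univ]
  simp only [Fintype.card_prod, Fintype.card_fin, nsmul_eq_mul]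
  push_cast
  ring

end KRY

namespace KRY

variable (ℓ m : ℕ) (Aw dw : ℝ)

lemma missing_unique {T : SimpleGraph (Vx ℓ m)} (hTG : T ≤ Gr ℓ m) (hc : T.Connected)
    (i : Fin (ℓ+1)) {j1 j2 : Fin (m+1)}
    (h1 : ¬ T.Adj (prev ℓ m i j1) (Sum.inr (i, j1)))
    (h2 : ¬ T.Adj (prev ℓ m i j2) (Sum.inr (i, j2))) : j1 = j2 := by
  have aux : ∀ (a b : Fin (m+1)), (a : ℕ) < (b : ℕ) →
      ¬ T.Adj (prev ℓ m i a) (Sum.inr (i, a)) →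
      ¬ T.Adj (prev ℓ m i b) (Sum.inr (i, b)) → False := by
    intro a b hab ha hb
    refine not_reachable_closed
      (S := {z | ∃ t : Fin (m+1), (a : ℕ) ≤ (t : ℕ) ∧ (t : ℕ) < (b : ℕ) ∧
        z = Sum.inr (i, t)}) ?_ ⟨a, le_refl _, hab, rfl⟩ ?_
      (hc.preconnected _ (vr ℓ m))
    · rintro x ⟨t, ht1, ht2, rfl⟩ y hadj
      rcases gr_adj_cases (hTG hadj) with ⟨h', -⟩ | ⟨-, h'⟩ | ⟨i', j', hx, rfl⟩ |
        ⟨i', j', rfl, hx⟩ | ⟨i', h', -⟩ | ⟨i', -, h'⟩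
      · exact absurd h' (by simp [vr])
      · exact absurd h' (by simp [vc])
      · -- x = prev i' j', y = inr (i', j')
        obtain ⟨rfl, hj'⟩ := prev_eq_inr hx.symm
        by_cases hlt : (j' : ℕ) < (b : ℕ)
        · exact ⟨j', by omega, hlt, rfl⟩
        · exfalso
          have hjb : j' = b := Fin.ext (by omega)
          subst hjb
          rw [hx] at hadj
          exact hb hadj
      · -- y = prev i' j', x = inr (i', j') = inr (i, t)
        rw [Sum.inr.injEq, Prod.mk.injEq] at hx
        obtain ⟨rfl, rfl⟩ := hx
        by_cases hta : (t : ℕ) = (a : ℕ)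
        · exfalso
          have : t = a := Fin.ext hta
          subst this
          exact ha hadj.symm
        · unfold prev
          rw [if_neg (by omega)]
          exact ⟨⟨(t : ℕ) - 1, by omega⟩, by simp; omega, by simp; omega, rfl⟩
      · exact absurd h' (by simp [vr])
      · -- x = leaf i'' : t = m, contradiction with t < b ≤ m
        rw [leaf, Sum.inr.injEq, Prod.mk.injEq] at h'
        have := congrArg Fin.val h'.2
        simp [Fin.last] at this
        exfalso
        have hbm : (b : ℕ) < m + 1 := b.isLt
        omega
    · rintro ⟨t, -, -, h'⟩
      exact absurd h' (by simp [vr])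
  rcases lt_trichotomy (j1 : ℕ) (j2 : ℕ) with h | h | h
  · exact absurd (aux j1 j2 h h1 h2) id
  · exact Fin.ext h
  · exact absurd (aux j2 j1 h h2 h1) id

lemma exists_j0 {T : SimpleGraph (Vx ℓ m)} (hTG : T ≤ Gr ℓ m) (hc : T.Connected)
    (i : Fin (ℓ+1)) :
    ∃ j0 : Fin (m+1), ∀ j, j ≠ j0 → T.Adj (prev ℓ m i j) (Sum.inr (i, j)) := by
  by_cases hall : ∀ j, T.Adj (prev ℓ m i j) (Sum.inr (i, j))
  · exact ⟨0, fun j _ => hall j⟩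
  · push_neg at hall
    obtain ⟨j0, hj0⟩ := hall
    refine ⟨j0, fun j hne => ?_⟩
    by_contra hmiss
    exact hne (missing_unique ℓ m hTG hc i hmiss hj0)

lemma gweight_T_ge (T : SimpleGraph (Vx ℓ m)) (hTG : T ≤ Gr ℓ m)
    (hA : 0 ≤ Aw) (hd : 0 ≤ dw)
    (hdir : ∀ i, T.Adj (vr ℓ m) (leaf ℓ m i))
    (j0 : Fin (ℓ+1) → Fin (m+1))
    (hsp : ∀ i j, j ≠ j0 i → T.Adj (prev ℓ m i j) (Sum.inr (i, j))) :
    2 * ((ℓ : ℝ)+1) + ((ℓ : ℝ)+1) * ((m : ℝ) * dw) ≤ gweight T (wt ℓ m Aw dw) := by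
  classical
  set D : Finset (Sym2 (Vx ℓ m)) :=
    Finset.image (fun i => s(vr ℓ m, leaf ℓ m i)) Finset.univ with hD
  set B : Finset (Sym2 (Vx ℓ m)) :=
    Finset.univ.biUnion (fun i : Fin (ℓ+1) =>
      Finset.image (fun j => s(prev ℓ m i j, Sum.inr (i, j)))
        (Finset.univ.erase (j0 i))) with hB
  have hBmem : ∀ e ∈ B, ∃ i j, j ≠ j0 i ∧ e = s(prev ℓ m i j, Sum.inr (i, j)) := by
    intro e he
    rw [hB, Finset.mem_biUnion] at he
    obtain ⟨i, -, he⟩ := he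
    rw [Finset.mem_image] at he
    obtain ⟨j, hj, rfl⟩ := he
    exact ⟨i, j, (Finset.mem_erase.1 hj).1, rfl⟩
  have hsub : ∀ e ∈ D ∪ B, e ∈ T.edgeSet := by
    intro e he
    rcases Finset.mem_union.1 he with he | he
    · rw [hD, Finset.mem_image] at he
      obtain ⟨i, -, rfl⟩ := he
      exact (SimpleGraph.mem_edgeSet _).2 (hdir i)
    · obtain ⟨i, j, hj, rfl⟩ := hBmem e he
      exact (SimpleGraph.mem_edgeSet _).2 (hsp i j hj)
  refine le_trans ?_ (sum_le_gweight T (wt ℓ m Aw dw) (wt_nonneg ℓ m Aw dw hA hd) _ hsub)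
  have hdisj : Disjoint D B := by
    rw [Finset.disjoint_left]
    intro e heD heB
    rw [hD, Finset.mem_image] at heD
    obtain ⟨i, -, rfl⟩ := heD
    obtain ⟨i', j', -, heq⟩ := hBmem _ heB
    rw [Sym2.eq_iff] at heq
    rcases heq with ⟨h1, -⟩ | ⟨h1, -⟩
    · exact prev_ne_vr ℓ m i' j' h1.symm
    · exact inr_ne_vr ℓ m (i', j') h1.symm
  rw [Finset.sum_union hdisj]
  have hinjD : ∀ x ∈ (Finset.univ : Finset (Fin (ℓ+1))), ∀ y ∈ Finset.univ,
      s(vr ℓ m, leaf ℓ m x) = s(vr ℓ m, leaf ℓ m y) → x = y := by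
    rintro i - i' - h
    rw [Sym2.eq_iff] at h
    rcases h with ⟨-, h2⟩ | ⟨h1, -⟩
    · simpa [leaf] using h2
    · exact absurd h1 (vr_ne_leaf ℓ m i')
  have hDsum : ∑ e ∈ D, wt ℓ m Aw dw e = 2 * ((ℓ : ℝ)+1) := by
    rw [hD, Finset.sum_image hinjD,
      Finset.sum_congr rfl (fun i _ => wt_leaf ℓ m Aw dw i), Finset.sum_const,
      Finset.card_univ, Fintype.card_fin, nsmul_eq_mul]
    push_cast; ring
  have hone : ∀ i : Fin (ℓ+1),
      (∑ e ∈ Finset.image (fun j => s(prev ℓ m i j, Sum.inr (i, j)))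
        (Finset.univ.erase (j0 i)), wt ℓ m Aw dw e) = (m : ℝ) * dw := by
    intro i
    have hinj : ∀ x ∈ Finset.univ.erase (j0 i), ∀ y ∈ Finset.univ.erase (j0 i),
        s(prev ℓ m i x, Sum.inr (i, x)) = s(prev ℓ m i y, Sum.inr (i, y)) → x = y := by
      rintro j - j' - h
      exact (sedge_inj h).2
    rw [Finset.sum_image hinj,
      Finset.sum_congr rfl (fun j _ => wt_sedge ℓ m Aw dw i j), Finset.sum_const,
      Finset.card_erase_of_mem (Finset.mem_univ _), Finset.card_univ,
      Fintype.card_fin, nsmul_eq_mul]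
    simp
  have hpd : (↑(Finset.univ : Finset (Fin (ℓ+1))) : Set (Fin (ℓ+1))).PairwiseDisjoint
      (fun i : Fin (ℓ+1) => Finset.image (fun j => s(prev ℓ m i j, Sum.inr (i, j)))
        (Finset.univ.erase (j0 i))) := by
    rintro i - i' - hii'
    rw [Function.onFun, Finset.disjoint_left]
    intro e he he'
    rw [Finset.mem_image] at he he'
    obtain ⟨j, -, rfl⟩ := he
    obtain ⟨j', -, heq⟩ := he'
    exact hii' (sedge_inj heq.symm).1
  have hBsum : ∑ e ∈ B, wt ℓ m Aw dw e = ((ℓ : ℝ)+1) * ((m : ℝ) * dw) := by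
    rw [hB, Finset.sum_biUnion hpd,
      Finset.sum_congr rfl (fun i _ => hone i), Finset.sum_const, Finset.card_univ,
      Fintype.card_fin, nsmul_eq_mul]
    push_cast; ring
  rw [hDsum, hBsum]

end KRY

namespace KRY

variable (ℓ m : ℕ) (Aw dw : ℝ)

noncomputable def phi (i0 : Fin (ℓ+1)) : Vx ℓ m → ℝ :=
  Sum.elim (fun a => if a then Aw else 0)
    (fun p => if p.1 = i0 then Aw + ((p.2 : ℕ) + 1) * dw
      else max 2 (Aw - ((p.2 : ℕ) + 1) * dw))

lemma phi_vr (i0 : Fin (ℓ+1)) : phi ℓ m Aw dw i0 (vr ℓ m) = 0 := by simp [phi, vr]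
lemma phi_vc (i0 : Fin (ℓ+1)) : phi ℓ m Aw dw i0 (vc ℓ m) = Aw := by simp [phi, vc]

lemma phi_inr (i0 i : Fin (ℓ+1)) (j : Fin (m+1)) :
    phi ℓ m Aw dw i0 (Sum.inr (i, j)) =
      if i = i0 then Aw + (((j : ℕ) : ℝ) + 1) * dw
      else max 2 (Aw - (((j : ℕ) : ℝ) + 1) * dw) := by
  simp [phi]

lemma phi_leaf (i0 i : Fin (ℓ+1)) :
    phi ℓ m Aw dw i0 (leaf ℓ m i) =
      if i = i0 then Aw + ((m : ℝ) + 1) * dw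
      else max 2 (Aw - ((m : ℝ) + 1) * dw) := by
  unfold leaf
  rw [phi_inr]
  simp [Fin.last]

lemma forced_direct {α : ℝ} {T : SimpleGraph (Vx ℓ m)} (hTG : T ≤ Gr ℓ m)
    (hc : T.Connected) (hd : 0 ≤ dw) (hA2 : 2 ≤ Aw)
    (hAle : Aw ≤ 2 + ((m : ℝ) + 1) * dw)
    (hstrict : α * 2 < Aw + ((m : ℝ) + 1) * dw) (hα : 0 ≤ α)
    (hreq : ∀ v, wdist T (wt ℓ m Aw dw) (vr ℓ m) v ≤
      α * wdist (Gr ℓ m) (wt ℓ m Aw dw) (vr ℓ m) v)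
    (i0 : Fin (ℓ+1)) : T.Adj (vr ℓ m) (leaf ℓ m i0) := by
  by_contra hmiss
  have hA0 : 0 ≤ Aw := by linarith
  -- the key edge inequality for the potential
  have spoke_diff : ∀ (i : Fin (ℓ+1)) (j : Fin (m+1)),
      |phi ℓ m Aw dw i0 (Sum.inr (i, j)) - phi ℓ m Aw dw i0 (prev ℓ m i j)| ≤ dw := by
    intro i j
    by_cases hj0 : (j : ℕ) = 0
    · have hx : prev ℓ m i j = vc ℓ m := by unfold prev; rw [if_pos hj0]
      have hjr : (((j : ℕ) : ℝ)) = 0 := by exact_mod_cast hj0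
      rw [hx, phi_vc, phi_inr, hjr]
      by_cases hii : i = i0
      · rw [if_pos hii, abs_le]
        constructor <;> linarith
      · rw [if_neg hii, abs_le]
        rcases max_cases 2 (Aw - ((0 : ℝ) + 1) * dw) with ⟨h1, h2⟩ | ⟨h1, h2⟩ <;>
          rw [h1] <;> constructor <;> linarith
    · obtain ⟨k, hk⟩ : ∃ k, (j : ℕ) = k + 1 := ⟨(j : ℕ) - 1, by omega⟩
      have hx : ∃ j' : Fin (m+1), (j' : ℕ) = k ∧ prev ℓ m i j = Sum.inr (i, j') :=
        ⟨⟨k, by omega⟩, rfl, by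
          unfold prev; rw [if_neg hj0]; congr 2; exact Fin.ext (by simp; omega)⟩
      obtain ⟨j', hj', hx⟩ := hx
      have hmul : ((j : ℕ) : ℝ) * dw = ((j' : ℕ) : ℝ) * dw + dw := by
        have h1 : ((j : ℕ) : ℝ) = ((j' : ℕ) : ℝ) + 1 := by
          rw [show ((j' : ℕ) : ℝ) = (k : ℝ) by exact_mod_cast hj']
          exact_mod_cast hk
        rw [h1]; ring
      rw [hx, phi_inr, phi_inr]
      by_cases hii : i = i0
      · rw [if_pos hii, if_pos hii, abs_le]
        constructor <;> nlinarith [hmul, hd]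
      · rw [if_neg hii, if_neg hii, abs_le]
        rcases max_cases 2 (Aw - (((j : ℕ) : ℝ) + 1) * dw) with ⟨h1, h2⟩ | ⟨h1, h2⟩ <;>
          rcases max_cases 2 (Aw - (((j' : ℕ) : ℝ) + 1) * dw) with ⟨h3, h4⟩ | ⟨h3, h4⟩ <;>
          rw [h1, h3] <;> constructor <;> nlinarith [hmul, hd]
  have key : ∀ x y, T.Adj x y →
      phi ℓ m Aw dw i0 y - phi ℓ m Aw dw i0 x ≤ wt ℓ m Aw dw s(x, y) := by
    intro x y h
    rcases gr_adj_cases (hTG h) with ⟨rfl, rfl⟩ | ⟨rfl, rfl⟩ | ⟨i, j, rfl, rfl⟩ |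
      ⟨i, j, rfl, rfl⟩ | ⟨i, rfl, rfl⟩ | ⟨i, rfl, rfl⟩
    · rw [wt_rc, phi_vr, phi_vc]; linarith
    · rw [Sym2.eq_swap, wt_rc, phi_vr, phi_vc]; linarith
    · rw [wt_sedge]
      have := abs_le.1 (spoke_diff i j)
      linarith [this.1, this.2]
    · rw [Sym2.eq_swap, wt_sedge]
      have := abs_le.1 (spoke_diff i j)
      linarith [this.1, this.2]
    · by_cases hii : i = i0
      · subst hii; exact absurd h hmiss
      · rw [wt_leaf, phi_vr, phi_leaf, if_neg hii]
        rcases max_cases 2 (Aw - ((m : ℝ) + 1) * dw) with ⟨h1, h2⟩ | ⟨h1, h2⟩ <;>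
          rw [h1] <;> linarith
    · by_cases hii : i = i0
      · subst hii; exact absurd h.symm hmiss
      · rw [Sym2.eq_swap, wt_leaf, phi_vr, phi_leaf, if_neg hii]
        have := le_max_left 2 (Aw - ((m : ℝ) + 1) * dw)
        linarith
  have hwalk : ∀ p : T.Walk (vr ℓ m) (leaf ℓ m i0),
      Aw + ((m : ℝ) + 1) * dw ≤ walkWeight (wt ℓ m Aw dw) p := by
    intro p
    have hb := potential_le key p
    rw [phi_vr, phi_leaf, if_pos rfl] at hb
    linarith
  have h1 : Aw + ((m : ℝ) + 1) * dw ≤ wdist T (wt ℓ m Aw dw) (vr ℓ m) (leaf ℓ m i0) :=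
    le_wdist (hc.preconnected _ _) hwalk
  have h2 : wdist (Gr ℓ m) (wt ℓ m Aw dw) (vr ℓ m) (leaf ℓ m i0) ≤ 2 := by
    have hle := wdist_le_walk (wt_nonneg ℓ m Aw dw hA0 hd)
      (Walk.cons (gr_adj_leaf ℓ m i0) Walk.nil)
    rw [walkWeight_cons] at hle
    simpa [walkWeight, wt_leaf] using hle
  have h3 := hreq (leaf ℓ m i0)
  have h4 : α * wdist (Gr ℓ m) (wt ℓ m Aw dw) (vr ℓ m) (leaf ℓ m i0) ≤ α * 2 :=
    mul_le_mul_of_nonneg_left h2 hα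
  linarith

end KRY

section PlanarGeneric
variable {V : Type*}

lemma acyclic_branch_cycle3 {G F : SimpleGraph V} (hF : F.IsAcyclic) {rr : V}
    (hGF : ∀ ⦃x y⦄, G.Adj x y → x ≠ rr → y ≠ rr → F.Adj x y)
    {A B C : Set V}
    (hAc : (G.induce A).Connected) (hBc : (G.induce B).Connected)
    (hCc : (G.induce C).Connected)
    (hAB : Disjoint A B) (hAC : Disjoint A C) (hBC : Disjoint B C)
    (hrA : rr ∉ A) (hrB : rr ∉ B) (hrC : rr ∉ C)
    (eAB : ∃ a ∈ A, ∃ b ∈ B, G.Adj a b)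
    (eBC : ∃ b ∈ B, ∃ c ∈ C, G.Adj b c)
    (eCA : ∃ c ∈ C, ∃ a ∈ A, G.Adj c a) : False := by
  obtain ⟨a1, ha1, b1, hb1, hab⟩ := eAB
  obtain ⟨b2, hb2, c1, hc1, hbc⟩ := eBC
  obtain ⟨c2, hc2, a2, ha2, hca⟩ := eCA
  have ne_r : ∀ {X : Set V} {x : V}, x ∈ X → rr ∉ X → x ≠ rr :=
    fun hx hX he => hX (he ▸ hx)
  have hFab : F.Adj a1 b1 := hGF hab (ne_r ha1 hrA) (ne_r hb1 hrB)
  have hbridge := isAcyclic_iff_forall_adj_isBridge.1 hF hFab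
  rw [isBridge_iff] at hbridge
  apply hbridge
  have mkAdj : ∀ {x y : V}, F.Adj x y → s(x, y) ≠ s(a1, b1) →
      (F \ fromEdgeSet {s(a1, b1)}).Adj x y := by
    intro x y h hne
    rw [SimpleGraph.sdiff_adj]
    refine ⟨h, fun hcon => hne ?_⟩
    rw [fromEdgeSet_adj] at hcon
    exact hcon.1
  have notin : ∀ {X Y : Set V} {x y : V}, x ∈ X → y ∈ X →
      a1 ∈ Y ∨ b1 ∈ Y → Disjoint Y X → s(x, y) ≠ s(a1, b1) → True := fun _ _ _ _ _ => trivial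
  -- reachability inside each branch set
  have reach : ∀ {X : Set V}, (G.induce X).Connected → rr ∉ X →
      (b1 ∉ X ∨ a1 ∉ X) → ∀ {x y}, x ∈ X → y ∈ X →
      (F \ fromEdgeSet {s(a1, b1)}).Reachable x y := by
    intro X hXc hrX hout x y hx hy
    refine reachable_of_induce hXc ?_ hx hy
    intro u v hu hv huv
    refine mkAdj (hGF huv (ne_r hu hrX) (ne_r hv hrX)) ?_
    intro hcon
    rw [Sym2.eq_iff] at hcon
    rcases hout with hout | hout
    · rcases hcon with ⟨-, h2⟩ | ⟨h1, -⟩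
      · exact hout (h2 ▸ hv)
      · exact hout (h1 ▸ hu)
    · rcases hcon with ⟨h1, -⟩ | ⟨-, h2⟩
      · exact hout (h1 ▸ hu)
      · exact hout (h2 ▸ hv)
  have hdisjBA : b1 ∉ A := fun hcon => Set.disjoint_left.1 hAB hcon hb1
  have hdisjAB2 : a1 ∉ B := fun hcon => Set.disjoint_left.1 hAB ha1 hcon
  have hdisjAC : a1 ∉ C := fun hcon => Set.disjoint_left.1 hAC ha1 hcon
  -- cross adjacency in the pruned graph
  have crossCA : (F \ fromEdgeSet {s(a1, b1)}).Adj a2 c2 := by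
    refine mkAdj (hGF hca.symm (ne_r ha2 hrA) (ne_r hc2 hrC)) ?_
    intro hcon
    rw [Sym2.eq_iff] at hcon
    rcases hcon with ⟨-, h2⟩ | ⟨h1, -⟩
    · exact Set.disjoint_left.1 hBC hb1 (h2 ▸ hc2)
    · exact hdisjBA (h1 ▸ ha2)
  have crossBC : (F \ fromEdgeSet {s(a1, b1)}).Adj c1 b2 := by
    refine mkAdj (hGF hbc.symm (ne_r hc1 hrC) (ne_r hb2 hrB)) ?_
    intro hcon
    rw [Sym2.eq_iff] at hcon
    rcases hcon with ⟨h1, -⟩ | ⟨-, h2⟩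
    · exact hdisjAC (h1 ▸ hc1)
    · exact hdisjAB2 (h2 ▸ hb2)
  exact ((((reach hAc hrA (Or.inl hdisjBA) ha1 ha2).trans
    crossCA.reachable).trans
    (reach hCc hrC (Or.inr hdisjAC) hc2 hc1)).trans
    crossBC.reachable).trans
    (reach hBc hrB (Or.inr hdisjAB2) hb2 hb1)

lemma acyclic_branch_cycle4 {G F : SimpleGraph V} (hF : F.IsAcyclic) {rr : V}
    (hGF : ∀ ⦃x y⦄, G.Adj x y → x ≠ rr → y ≠ rr → F.Adj x y)
    {A B C D : Set V}
    (hAc : (G.induce A).Connected) (hBc : (G.induce B).Connected)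
    (hCc : (G.induce C).Connected) (hDc : (G.induce D).Connected)
    (hAB : Disjoint A B) (hAC : Disjoint A C) (hAD : Disjoint A D)
    (hBC : Disjoint B C) (hBD : Disjoint B D) (hCD : Disjoint C D)
    (hrA : rr ∉ A) (hrB : rr ∉ B) (hrC : rr ∉ C) (hrD : rr ∉ D)
    (eAB : ∃ a ∈ A, ∃ b ∈ B, G.Adj a b)
    (eBC : ∃ b ∈ B, ∃ c ∈ C, G.Adj b c)
    (eCD : ∃ c ∈ C, ∃ d ∈ D, G.Adj c d)
    (eDA : ∃ d ∈ D, ∃ a ∈ A, G.Adj d a) : False := by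
  obtain ⟨a1, ha1, b1, hb1, hab⟩ := eAB
  obtain ⟨b2, hb2, c1, hc1, hbc⟩ := eBC
  obtain ⟨c2, hc2, d1, hd1, hcd⟩ := eCD
  obtain ⟨d2, hd2, a2, ha2, hda⟩ := eDA
  have ne_r : ∀ {X : Set V} {x : V}, x ∈ X → rr ∉ X → x ≠ rr :=
    fun hx hX he => hX (he ▸ hx)
  have hFab : F.Adj a1 b1 := hGF hab (ne_r ha1 hrA) (ne_r hb1 hrB)
  have hbridge := isAcyclic_iff_forall_adj_isBridge.1 hF hFab
  rw [isBridge_iff] at hbridge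
  apply hbridge
  have mkAdj : ∀ {x y : V}, F.Adj x y → s(x, y) ≠ s(a1, b1) →
      (F \ fromEdgeSet {s(a1, b1)}).Adj x y := by
    intro x y h hne
    rw [SimpleGraph.sdiff_adj]
    refine ⟨h, fun hcon => hne ?_⟩
    rw [fromEdgeSet_adj] at hcon
    exact hcon.1
  have reach : ∀ {X : Set V}, (G.induce X).Connected → rr ∉ X →
      (b1 ∉ X ∨ a1 ∉ X) → ∀ {x y}, x ∈ X → y ∈ X →
      (F \ fromEdgeSet {s(a1, b1)}).Reachable x y := by
    intro X hXc hrX hout x y hx hy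
    refine reachable_of_induce hXc ?_ hx hy
    intro u v hu hv huv
    refine mkAdj (hGF huv (ne_r hu hrX) (ne_r hv hrX)) ?_
    intro hcon
    rw [Sym2.eq_iff] at hcon
    rcases hout with hout | hout
    · rcases hcon with ⟨-, h2⟩ | ⟨h1, -⟩
      · exact hout (h2 ▸ hv)
      · exact hout (h1 ▸ hu)
    · rcases hcon with ⟨h1, -⟩ | ⟨-, h2⟩
      · exact hout (h1 ▸ hu)
      · exact hout (h2 ▸ hv)
  have hb1A : b1 ∉ A := fun hcon => Set.disjoint_left.1 hAB hcon hb1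
  have ha1B : a1 ∉ B := fun hcon => Set.disjoint_left.1 hAB ha1 hcon
  have ha1C : a1 ∉ C := fun hcon => Set.disjoint_left.1 hAC ha1 hcon
  have ha1D : a1 ∉ D := fun hcon => Set.disjoint_left.1 hAD ha1 hcon
  have crossDA : (F \ fromEdgeSet {s(a1, b1)}).Adj a2 d2 := by
    refine mkAdj (hGF hda.symm (ne_r ha2 hrA) (ne_r hd2 hrD)) ?_
    intro hcon
    rw [Sym2.eq_iff] at hcon
    rcases hcon with ⟨-, h2⟩ | ⟨h1, -⟩
    · exact Set.disjoint_left.1 hBD hb1 (h2 ▸ hd2)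
    · exact hb1A (h1 ▸ ha2)
  have crossCD : (F \ fromEdgeSet {s(a1, b1)}).Adj d1 c2 := by
    refine mkAdj (hGF hcd.symm (ne_r hd1 hrD) (ne_r hc2 hrC)) ?_
    intro hcon
    rw [Sym2.eq_iff] at hcon
    rcases hcon with ⟨h1, -⟩ | ⟨-, h2⟩
    · exact ha1D (h1 ▸ hd1)
    · exact ha1C (h2 ▸ hc2)
  have crossBC : (F \ fromEdgeSet {s(a1, b1)}).Adj c1 b2 := by
    refine mkAdj (hGF hbc.symm (ne_r hc1 hrC) (ne_r hb2 hrB)) ?_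
    intro hcon
    rw [Sym2.eq_iff] at hcon
    rcases hcon with ⟨h1, -⟩ | ⟨-, h2⟩
    · exact ha1C (h1 ▸ hc1)
    · exact ha1B (h2 ▸ hb2)
  exact ((((((reach hAc hrA (Or.inl hb1A) ha1 ha2).trans
    crossDA.reachable).trans
    (reach hDc hrD (Or.inr ha1D) hd2 hd1)).trans
    crossCD.reachable).trans
    (reach hCc hrC (Or.inr ha1C) hc2 hc1)).trans
    crossBC.reachable).trans
    (reach hBc hrB (Or.inr ha1B) hb2 hb1)

lemma pick_two {P : Fin 3 → Prop} (h : ∀ i j, i ≠ j → P i ∨ P j) :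
    ∃ x y, x ≠ y ∧ P x ∧ P y := by
  rcases h 0 1 (by decide) with h0 | h1
  · rcases h 1 2 (by decide) with h1 | h2
    · exact ⟨0, 1, by decide, h0, h1⟩
    · exact ⟨0, 2, by decide, h0, h2⟩
  · rcases h 0 2 (by decide) with h0 | h2
    · exact ⟨1, 0, by decide, h1, h0⟩
    · exact ⟨1, 2, by decide, h1, h2⟩

lemma pick_three {P : Fin 5 → Prop} (h : ∀ i j, i ≠ j → P i ∨ P j) :
    ∃ x y z, x ≠ y ∧ x ≠ z ∧ y ≠ z ∧ P x ∧ P y ∧ P z := by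
  rcases h 0 1 (by decide) with h0 | h1
  · rcases h 2 3 (by decide) with h2 | h3
    · rcases h 1 4 (by decide) with h1 | h4
      · exact ⟨0, 2, 1, by decide, by decide, by decide, h0, h2, h1⟩
      · exact ⟨0, 2, 4, by decide, by decide, by decide, h0, h2, h4⟩
    · rcases h 1 4 (by decide) with h1 | h4
      · exact ⟨0, 3, 1, by decide, by decide, by decide, h0, h3, h1⟩
      · exact ⟨0, 3, 4, by decide, by decide, by decide, h0, h3, h4⟩
  · rcases h 2 3 (by decide) with h2 | h3
    · rcases h 0 4 (by decide) with h0 | h4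
      · exact ⟨1, 2, 0, by decide, by decide, by decide, h1, h2, h0⟩
      · exact ⟨1, 2, 4, by decide, by decide, by decide, h1, h2, h4⟩
    · rcases h 0 4 (by decide) with h0 | h4
      · exact ⟨1, 3, 0, by decide, by decide, by decide, h1, h3, h0⟩
      · exact ⟨1, 3, 4, by decide, by decide, by decide, h1, h3, h4⟩

end PlanarGeneric

namespace KRY

variable (ℓ m : ℕ)

lemma gtree_cond : ∀ ⦃x y : Vx ℓ m⦄, (Gr ℓ m).Adj x y → x ≠ vr ℓ m → y ≠ vr ℓ m →
    (Gtree ℓ m).Adj x y := fun _ _ h hx hy => ⟨h, hx, hy⟩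

lemma gr_no_K5 : ¬ GraphIsMinor (⊤ : SimpleGraph (Fin 5)) (Gr ℓ m) := by
  rintro ⟨f, hconn, hdisj, hadj⟩
  have h2 : ∀ i j : Fin 5, i ≠ j → vr ℓ m ∉ f i ∨ vr ℓ m ∉ f j := by
    intro i j hij
    by_contra hcon
    push_neg at hcon
    exact Set.disjoint_left.1 (hdisj hij) hcon.1 hcon.2
  obtain ⟨x, y, z, hxy, hxz, hyz, hx, hy, hz⟩ := pick_three h2
  exact acyclic_branch_cycle3 (gtree_acyclic ℓ m) (gtree_cond ℓ m)
    (hconn x) (hconn y) (hconn z)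
    (hdisj hxy) (hdisj hxz) (hdisj hyz) hx hy hz
    (hadj x y (by simp [hxy]))
    (hadj y z (by simp [hyz]))
    (hadj z x (by simp [hxz.symm]))

lemma gr_no_K33 : ¬ GraphIsMinor (completeBipartiteGraph (Fin 3) (Fin 3)) (Gr ℓ m) := by
  rintro ⟨f, hconn, hdisj, hadj⟩
  have huniq : ∀ i j : Fin 3 ⊕ Fin 3, i ≠ j → vr ℓ m ∉ f i ∨ vr ℓ m ∉ f j := by
    intro i j hij
    by_contra hcon
    push_neg at hcon
    exact Set.disjoint_left.1 (hdisj hij) hcon.1 hcon.2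
  obtain ⟨a1, a2, ha12, ha1, ha2⟩ :=
    pick_two (P := fun a : Fin 3 => vr ℓ m ∉ f (Sum.inl a))
      (fun i j hij => huniq _ _ (by simp [hij]))
  obtain ⟨b1, b2, hb12, hb1, hb2⟩ :=
    pick_two (P := fun b : Fin 3 => vr ℓ m ∉ f (Sum.inr b))
      (fun i j hij => huniq _ _ (by simp [hij]))
  have hadj' : ∀ (a b : Fin 3), ∃ u ∈ f (Sum.inl a), ∃ v ∈ f (Sum.inr b), (Gr ℓ m).Adj u v :=
    fun a b => hadj _ _ (by simp)
  refine acyclic_branch_cycle4 (gtree_acyclic ℓ m) (gtree_cond ℓ m)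
    (hconn (Sum.inl a1)) (hconn (Sum.inr b1)) (hconn (Sum.inl a2)) (hconn (Sum.inr b2))
    (hdisj (by simp)) (hdisj (by simp [ha12])) (hdisj (by simp))
    (hdisj (by simp)) (hdisj (by simp [hb12])) (hdisj (by simp))
    ha1 hb1 ha2 hb2
    (hadj' a1 b1) ?_ ?_ ?_
  · obtain ⟨u, hu, v, hv, huv⟩ := hadj' a2 b1
    exact ⟨v, hv, u, hu, huv.symm⟩
  · exact hadj' a2 b2
  · obtain ⟨u, hu, v, hv, huv⟩ := hadj' a1 b2
    exact ⟨v, hv, u, hu, huv.symm⟩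

lemma gr_planar : GraphIsPlanar (Gr ℓ m) := ⟨gr_no_K5 ℓ m, gr_no_K33 ℓ m⟩

end KRY

section Transfer

variable {U W : Type*} (e : U ≃ W)

def tg (G : SimpleGraph U) : SimpleGraph W := G.comap e.symm

noncomputable def twt (w : Sym2 U → ℝ) : Sym2 W → ℝ := fun s => w (s.map e.symm)

lemma tg_adj (G : SimpleGraph U) (a b : W) :
    (tg e G).Adj a b ↔ G.Adj (e.symm a) (e.symm b) := Iff.rfl

lemma twt_map (w : Sym2 U → ℝ) (s : Sym2 U) : twt e w (s.map e) = w s := by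
  unfold twt
  rw [Sym2.map_map, Equiv.symm_comp_self, Sym2.map_id, id_eq]

def toH (G : SimpleGraph U) : G →g tg e G :=
  ⟨e, fun {a b} h => by simpa [tg] using h⟩

def fromH (G : SimpleGraph U) : tg e G →g G := ⟨e.symm, fun {a b} h => h⟩

lemma walkWeight_map_toH (G : SimpleGraph U) (w : Sym2 U → ℝ) {u v : U}
    (p : G.Walk u v) : walkWeight (twt e w) (p.map (toH e G)) = walkWeight w p := by
  induction p with
  | nil => simp [walkWeight]
  | @cons a b c hab q ih =>
      rw [SimpleGraph.Walk.map_cons, walkWeight_cons, walkWeight_cons, ih]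
      congr 1
      have : s((toH e G) a, (toH e G) b) = Sym2.map e s(a, b) := by
        rw [Sym2.map_pair_eq, Sym2.eq_iff]
        exact Or.inl ⟨rfl, rfl⟩
      rw [this, twt_map]
  
lemma walkWeight_map_fromH (G : SimpleGraph U) (w : Sym2 U → ℝ) {a b : W}
    (p : (tg e G).Walk a b) :
    walkWeight w (p.map (fromH e G)) = walkWeight (twt e w) p := by
  induction p with
  | nil => simp [walkWeight]
  | @cons x y z hxy q ih =>
      rw [SimpleGraph.Walk.map_cons, walkWeight_cons, walkWeight_cons, ih]
      congr 1

lemma walkWeight_copy {G : SimpleGraph U} (w : Sym2 U → ℝ) {u v u' v' : U}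
    (p : G.Walk u v) (h1 : u = u') (h2 : v = v') :
    walkWeight w (p.copy h1 h2) = walkWeight w p := by
  unfold walkWeight
  rw [SimpleGraph.Walk.edges_copy]

lemma wdist_tg (G : SimpleGraph U) (w : Sym2 U → ℝ) (u v : U) :
    wdist (tg e G) (twt e w) (e u) (e v) = wdist G w u v := by
  unfold wdist
  congr 1
  ext x
  constructor
  · rintro ⟨p, rfl⟩
    refine ⟨(p.map (fromH e G)).copy (e.symm_apply_apply u) (e.symm_apply_apply v), ?_⟩
    exact (walkWeight_copy w _ _ _).trans (walkWeight_map_fromH e G w p)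
  · rintro ⟨p, rfl⟩
    exact ⟨p.map (toH e G), walkWeight_map_toH e G w p⟩

lemma tg_le {G H : SimpleGraph U} (h : G ≤ H) : tg e G ≤ tg e H :=
  fun _ _ hab => h hab

lemma tg_tg (G : SimpleGraph U) : tg e.symm (tg e G) = G := by
  ext a b
  simp [tg]

lemma tg_connected {G : SimpleGraph U} (h : G.Connected) : (tg e G).Connected :=
  h.map (toH e G) e.surjective

lemma tg_acyclic {G : SimpleGraph U} (h : G.IsAcyclic) : (tg e G).IsAcyclic := by
  intro a c hc
  exact h (c.map (fromH e G))
    ((SimpleGraph.Walk.map_isCycle_iff_of_injective e.symm.injective).2 hc)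

lemma tg_isTree {G : SimpleGraph U} (h : G.IsTree) : (tg e G).IsTree := by
  rw [SimpleGraph.isTree_iff] at h ⊢
  exact ⟨tg_connected e h.1, tg_acyclic e h.2⟩

lemma gweight_tg [Fintype U] [Fintype W] (G : SimpleGraph U) (w : Sym2 U → ℝ) :
    gweight (tg e G) (twt e w) = gweight G w := by
  classical
  have hinj : Function.Injective (Sym2.map e) := Sym2.map.injective e.injective
  rw [gweight_eq_sum (tg e G) (twt e w) (Finset.image (Sym2.map e) G.edgeSet.toFinset) ?_,
    Finset.sum_image (fun x _ y _ h => hinj h),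
    gweight_eq_sum G w G.edgeSet.toFinset (fun s => Set.mem_toFinset)]
  · exact Finset.sum_congr rfl (fun s _ => twt_map e w s)
  · intro s
    rw [Finset.mem_image]
    constructor
    · rintro ⟨t, ht, rfl⟩
      rw [Set.mem_toFinset] at ht
      revert ht
      refine Sym2.ind (fun a b hab => ?_) t
      have : (tg e G).Adj (e a) (e b) := by
        rw [tg_adj]
        simpa using hab
      exact (SimpleGraph.mem_edgeSet _).2 this
    · intro hs
      revert hs
      refine Sym2.ind (fun a b hab => ?_) s
      refine ⟨s(e.symm a, e.symm b),
        Set.mem_toFinset.2 ((SimpleGraph.mem_edgeSet _).2 ((tg_adj e G a b).1 hab)), ?_⟩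
      simp

lemma twt_twt (w : Sym2 U → ℝ) : twt e.symm (twt e w) = w := by
  funext s
  simp [twt, Sym2.map_map, Equiv.symm_comp_self]

lemma minor_tg {X : Type*} {H : SimpleGraph X} {G : SimpleGraph U}
    (hm : GraphIsMinor H (tg e G)) : GraphIsMinor H G := by
  obtain ⟨f, hconn, hdisj, hadj⟩ := hm
  refine ⟨fun x => e.symm '' f x, fun x => ?_, fun x y hxy => ?_, fun x y hxy => ?_⟩
  · refine (hconn x).map
      ⟨fun a => ⟨e.symm a.1, Set.mem_image_of_mem _ a.2⟩,
        fun {a b} hab => by simpa [tg_adj] using hab⟩ ?_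
    rintro ⟨y, ⟨a, ha, rfl⟩⟩
    exact ⟨⟨a, ha⟩, rfl⟩
  · apply Set.disjoint_left.2
    rintro a ⟨b, hb, rfl⟩ ⟨c, hc, hcb⟩
    have hbc : c = b := e.symm.injective hcb
    subst hbc
    exact Set.disjoint_left.1 (hdisj hxy) hb hc
  · obtain ⟨a, ha, b, hb, hab⟩ := hadj x y hxy
    exact ⟨e.symm a, Set.mem_image_of_mem _ ha, e.symm b, Set.mem_image_of_mem _ hb, hab⟩

end Transfer

/-- For every `α > 1`, every `β` with `1 ≤ β < 1 + 2/(α-1)`, and every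
`ε > 0`, there is a (planar, connected, nonnegatively weighted) graph `G` with a root `r`
in which every spanning tree satisfying the `α`-distance requirement has weight strictly
greater than `β` times the minimum spanning tree weight. -/
theorem no_LAST_below_tradeoff (α β ε : ℝ) (hα : 1 < α) (hβ1 : 1 ≤ β)
    (hβ2 : β < 1 + 2 / (α - 1)) (hε : 0 < ε) :
    ∃ (n : ℕ) (G : SimpleGraph (Fin n)) (w : Sym2 (Fin n) → ℝ) (r : Fin n),
      (∀ e, 0 ≤ w e) ∧ G.Connected ∧ GraphIsPlanar G ∧
      ∀ T : SimpleGraph (Fin n), T ≤ G → T.IsTree →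
        (∀ v, wdist T w r v ≤ α * wdist G w r v) →
        ∀ M : SimpleGraph (Fin n), M ≤ G → M.IsTree →
          (∀ M' : SimpleGraph (Fin n), M' ≤ G → M'.IsTree → gweight M w ≤ gweight M' w) →
          β * gweight M w < gweight T w := by
  classical
  have hα0 : (0:ℝ) < α - 1 := by linarith
  have hβpos : (0:ℝ) < β := by linarith
  set g : ℝ := (α + 1) - β * (α - 1) with hgdef
  set ε' : ℝ := g / (4 * β) with hε'def
  set S : ℝ := α - 1 + ε' with hSdef
  set Aw : ℝ := α + 1 with hAwdef
  set m : ℕ := ⌈4 * S / g⌉₊ with hmdef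
  set dw : ℝ := S / ((m : ℝ) + 1) with hdwdef
  set ℓ : ℕ := ⌈2 * (1 + β) * Aw / g⌉₊ with hℓdef
  have hm4 : 4 * S / g ≤ (m : ℝ) := by rw [hmdef]; exact Nat.le_ceil _
  have hℓ4 : 2 * (1 + β) * Aw / g ≤ (ℓ : ℝ) := by rw [hℓdef]; exact Nat.le_ceil _
  clear_value g ε' S Aw m dw ℓ
  have hg : 0 < g := by
    have h2 : β * (α - 1) < (1 + 2/(α-1)) * (α - 1) := mul_lt_mul_of_pos_right hβ2 hα0
    have h3 : (1 + 2/(α-1)) * (α - 1) = α + 1 := by field_simp; ring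
    rw [h3] at h2
    rw [hgdef, hAwdef]; linarith
  have hε' : 0 < ε' := by rw [hε'def]; exact div_pos hg (by linarith)
  have hβε : β * ε' = g / 4 := by
    rw [hε'def]
    field_simp
  have hS : 0 < S := by rw [hSdef]; linarith
  have hAw2 : 2 < Aw := by rw [hAwdef]; linarith
  have hmpos : (0:ℝ) < (m : ℝ) + 1 := by positivity
  have hdw : 0 < dw := by rw [hdwdef]; exact div_pos hS hmpos
  have hdwS : ((m : ℝ) + 1) * dw = S := by rw [hdwdef]; field_simp
  have hdle : dw ≤ g / 4 := by
    rw [hdwdef, div_le_iff₀ hmpos]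
    have hid : g / 4 * (4 * S / g) = S := by field_simp
    have hmul := mul_le_mul_of_nonneg_left hm4 (le_of_lt (by positivity : (0:ℝ) < g/4))
    linarith [hid, hmul]
  have hAle : Aw ≤ 2 + ((m : ℝ) + 1) * dw := by
    rw [hdwS, hAwdef, hSdef]; linarith
  have hstrict : α * 2 < Aw + ((m : ℝ) + 1) * dw := by
    rw [hdwS, hAwdef, hSdef]; linarith
  have hmdw : (m : ℝ) * dw = S - dw := by
    have h : (m : ℝ) * dw = ((m : ℝ) + 1) * dw - dw := by ring
    rw [h, hdwS]
  have hco : β * S + g / 2 ≤ 2 + S - dw := by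
    have hbs : β * S = β * (α - 1) + β * ε' := by rw [hSdef]; ring
    have hgd : g = Aw - β * (α - 1) := hgdef
    rw [hSdef]
    linarith [hbs, hβε, hdle, hε'.le, hgd, hAwdef]
  have hLg : (1 + β) * Aw ≤ ((ℓ : ℝ) + 1) * (g / 2) := by
    have h1 : 2 * (1 + β) * Aw / g * (g / 2) = (1 + β) * Aw := by field_simp
    have h2 : 2 * (1 + β) * Aw / g * (g / 2) ≤ (ℓ : ℝ) * (g / 2) :=
      mul_le_mul_of_nonneg_right hℓ4 (by positivity)
    rw [h1] at h2
    nlinarith [hg]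
  have harith : β * (Aw + ((ℓ : ℝ) + 1) * (((m : ℝ) + 1) * dw)) <
      2 * ((ℓ : ℝ) + 1) + ((ℓ : ℝ) + 1) * ((m : ℝ) * dw) := by
    rw [hdwS, hmdw]
    have h5 : ((ℓ : ℝ) + 1) * (β * S + g / 2) ≤ ((ℓ : ℝ) + 1) * (2 + S - dw) :=
      mul_le_mul_of_nonneg_left hco (by positivity)
    nlinarith [h5, hLg, hAw2]
  -- the main property on the structured vertex type
  have main : ∀ T : SimpleGraph (KRY.Vx ℓ m), T ≤ KRY.Gr ℓ m → T.IsTree →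
      (∀ v, wdist T (KRY.wt ℓ m Aw dw) (KRY.vr ℓ m) v ≤
        α * wdist (KRY.Gr ℓ m) (KRY.wt ℓ m Aw dw) (KRY.vr ℓ m) v) →
      ∀ M : SimpleGraph (KRY.Vx ℓ m), M ≤ KRY.Gr ℓ m → M.IsTree →
        (∀ M' : SimpleGraph (KRY.Vx ℓ m), M' ≤ KRY.Gr ℓ m → M'.IsTree →
          gweight M (KRY.wt ℓ m Aw dw) ≤ gweight M' (KRY.wt ℓ m Aw dw)) →
        β * gweight M (KRY.wt ℓ m Aw dw) < gweight T (KRY.wt ℓ m Aw dw) := by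
    intro T hTG hTt hreq M hMG hMt hMmin
    have hTc : T.Connected := ((SimpleGraph.isTree_iff T).1 hTt).1
    have hdir : ∀ i, T.Adj (KRY.vr ℓ m) (KRY.leaf ℓ m i) := fun i =>
      KRY.forced_direct ℓ m Aw dw hTG hTc hdw.le hAw2.le hAle hstrict
        (by linarith) hreq i
    choose j0 hsp using KRY.exists_j0 ℓ m hTG hTc
    have hTlow := KRY.gweight_T_ge ℓ m Aw dw T hTG (by linarith) hdw.le hdir j0
      (fun i j hj => hsp i j hj)
    have hMhigh : gweight M (KRY.wt ℓ m Aw dw) ≤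
        Aw + ((ℓ : ℝ) + 1) * (((m : ℝ) + 1) * dw) := by
      have h := hMmin (KRY.M0 ℓ m) (KRY.m0_le_gr ℓ m) (KRY.m0_isTree ℓ m)
      rw [KRY.gweight_m0] at h
      exact h
    calc β * gweight M (KRY.wt ℓ m Aw dw)
        ≤ β * (Aw + ((ℓ : ℝ) + 1) * (((m : ℝ) + 1) * dw)) :=
          mul_le_mul_of_nonneg_left hMhigh (by linarith)
      _ < 2 * ((ℓ : ℝ) + 1) + ((ℓ : ℝ) + 1) * ((m : ℝ) * dw) := harith
      _ ≤ gweight T (KRY.wt ℓ m Aw dw) := hTlow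
  -- transfer to Fin n
  set n : ℕ := Fintype.card (KRY.Vx ℓ m) with hndef
  set eqv : KRY.Vx ℓ m ≃ Fin n := Fintype.equivFin (KRY.Vx ℓ m) with heqv
  refine ⟨n, tg eqv (KRY.Gr ℓ m), twt eqv (KRY.wt ℓ m Aw dw), eqv (KRY.vr ℓ m),
    ?_, ?_, ⟨?_, ?_⟩, ?_⟩
  · intro s
    exact KRY.wt_nonneg ℓ m Aw dw (by linarith) hdw.le _
  · exact tg_connected eqv (KRY.gr_connected ℓ m)
  · intro h
    exact KRY.gr_no_K5 ℓ m (minor_tg eqv h)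
  · intro h
    exact KRY.gr_no_K33 ℓ m (minor_tg eqv h)
  · intro T' hT'le hT'tree hT'req M' hM'le hM'tree hM'min
    set T : SimpleGraph (KRY.Vx ℓ m) := tg eqv.symm T' with hT
    set M : SimpleGraph (KRY.Vx ℓ m) := tg eqv.symm M' with hM
    have hTT : tg eqv T = T' := by
      rw [hT]
      have h := tg_tg eqv.symm T'
      simpa using h
    have hMM : tg eqv M = M' := by
      rw [hM]
      have h := tg_tg eqv.symm M'
      simpa using h
    have hTle : T ≤ KRY.Gr ℓ m := by
      have h := tg_le eqv.symm hT'le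
      rwa [tg_tg] at h
    have hMle : M ≤ KRY.Gr ℓ m := by
      have h := tg_le eqv.symm hM'le
      rwa [tg_tg] at h
    have hTtree : T.IsTree := tg_isTree eqv.symm hT'tree
    have hMtree : M.IsTree := tg_isTree eqv.symm hM'tree
    have hreqT : ∀ v, wdist T (KRY.wt ℓ m Aw dw) (KRY.vr ℓ m) v ≤
        α * wdist (KRY.Gr ℓ m) (KRY.wt ℓ m Aw dw) (KRY.vr ℓ m) v := by
      intro v
      have h := hT'req (eqv v)
      rw [← hTT, wdist_tg, wdist_tg] at h
      exact h
    have hMmin' : ∀ N : SimpleGraph (KRY.Vx ℓ m), N ≤ KRY.Gr ℓ m → N.IsTree →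
        gweight M (KRY.wt ℓ m Aw dw) ≤ gweight N (KRY.wt ℓ m Aw dw) := by
      intro N hNle hNtree
      have h := hM'min (tg eqv N) (tg_le eqv hNle) (tg_isTree eqv hNtree)
      rw [← hMM, gweight_tg, gweight_tg] at h
      exact h
    have hfinal := main T hTle hTtree hreqT M hMle hMtree hMmin'
    rw [← hMM, ← hTT, gweight_tg, gweight_tg]
    exact hfinal
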